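/- arXiv:1101.4320 — 4 statements merged into one kernel-verified Lean document; each statement's English description precedes it below -/
import Mathlib

section
/- Let E be a complex normed space and let ‖·‖ be a c₀-norm on the algebraic tensor product c₀ ⊗ E. Then ‖·‖ is a reasonable cross-norm; that is: (i) ‖a ⊗ x‖ = ‖a‖_{c₀}‖x‖ for every a ∈ c₀ and x ∈ E; (ii) for every τ ∈ c₀ ⊗ E and every representation τ = Σ_{j=1}^{k} a_j ⊗ x_j one has ‖τ‖ ≤ Σ_{j=1}^{k} ‖a_j‖‖x_j‖ (so ‖·‖ is dominated by the projective tensor norm); and (iii) for every λ ∈ (c₀)' and μ ∈ E' and every τ = Σ_{j=1}^{k} a_j ⊗ x_j ∈ c₀ ⊗ E one has |Σ_{j=1}^{k} λ(a_j)μ(x_j)| ≤ ‖λ‖‖μ‖‖τ‖ (so ‖·‖ dominates the injective tensor norm). -/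
open ZeroAtInfty NormedSpace TensorProduct

/-- The standard basis vector `δₙ` of `c₀ = C₀(ℕ, ℂ)`. -/
noncomputable def c0delta (n : ℕ) : C₀(ℕ, ℂ) :=
  ⟨⟨fun m => if m = n then 1 else 0, continuous_of_discreteTopology⟩, by
    simp only [ContinuousMap.coe_mk]
    rw [Filter.cocompact_eq_cofinite ℕ]
    apply Filter.Tendsto.congr' (f₁ := fun _ => (0 : ℂ))
    · rw [Filter.eventuallyEq_iff_exists_mem]
      exact ⟨{m | m ≠ n}, by simp [Filter.mem_cofinite], fun m hm => (if_neg hm).symm⟩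
    · exact tendsto_const_nhds⟩

lemma c0delta_apply (n m : ℕ) : c0delta n m = if m = n then 1 else 0 := rfl

/-- Any rank-one operator is compact. -/
lemma rankOne_isCompactOperator {F : Type*} [NormedAddCommGroup F] [NormedSpace ℂ F]
    (lam : F →L[ℂ] ℂ) (g : F) : IsCompactOperator (lam.smulRight g) := by
  rw [isCompactOperator_iff_exists_mem_nhds_image_subset_compact]
  refine ⟨Metric.ball 0 1, Metric.ball_mem_nhds 0 one_pos,
    (fun c : ℂ => c • g) '' Metric.closedBall 0 ‖lam‖,
    (isCompact_closedBall (0 : ℂ) ‖lam‖).image (continuous_id.smul continuous_const), ?_⟩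
  rintro _ ⟨f, hf, rfl⟩
  refine ⟨lam f, ?_, rfl⟩
  rw [Metric.mem_closedBall, dist_zero_right]
  calc ‖lam f‖ ≤ ‖lam‖ * ‖f‖ := lam.le_opNorm f
    _ ≤ ‖lam‖ * 1 := by
        have : ‖f‖ ≤ 1 := le_of_lt (by simpa [dist_zero_right] using hf)
        exact mul_le_mul_of_nonneg_left this (norm_nonneg _)
    _ = ‖lam‖ := mul_one _

/-- The inclusion `c₀ → ℓ∞` as a continuous linear map. -/
noncomputable def toBCFclm : C₀(ℕ, ℂ) →L[ℂ] BoundedContinuousFunction ℕ ℂ where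
  toFun := ZeroAtInftyContinuousMap.toBCF
  map_add' _ _ := rfl
  map_smul' _ _ := rfl
  cont := ZeroAtInftyContinuousMap.isometry_toBCF.continuous

/-- The evaluation functional on `c₀`. -/
noncomputable def c0eval (n : ℕ) : C₀(ℕ, ℂ) →L[ℂ] ℂ :=
  (BoundedContinuousFunction.evalCLM ℂ n).comp toBCFclm

lemma c0eval_apply (n : ℕ) (f : C₀(ℕ, ℂ)) : c0eval n f = f n := rfl

lemma c0eval_norm_le (n : ℕ) : ‖c0eval n‖ ≤ 1 := by
  refine ContinuousLinearMap.opNorm_le_bound _ zero_le_one fun f => ?_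
  rw [one_mul, c0eval_apply]
  calc ‖f n‖ = ‖f.toBCF n‖ := rfl
    _ ≤ ‖f.toBCF‖ := BoundedContinuousFunction.norm_coe_le_norm _ n
    _ = ‖f‖ := ZeroAtInftyContinuousMap.norm_toBCF_eq_norm

lemma c0delta_norm (n : ℕ) : ‖c0delta n‖ = 1 := by
  apply le_antisymm
  · rw [← ZeroAtInftyContinuousMap.norm_toBCF_eq_norm]
    refine BoundedContinuousFunction.norm_le zero_le_one |>.mpr fun m => ?_
    show ‖c0delta n m‖ ≤ 1
    rw [c0delta_apply]
    split <;> simp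
  · calc (1 : ℝ) = ‖c0delta n n‖ := by rw [c0delta_apply]; simp
      _ = ‖(c0delta n).toBCF n‖ := rfl
      _ ≤ ‖(c0delta n).toBCF‖ := BoundedContinuousFunction.norm_coe_le_norm _ n
      _ = ‖c0delta n‖ := ZeroAtInftyContinuousMap.norm_toBCF_eq_norm

/-- every `c₀`-norm `N` on `c₀ ⊗ E` is a reasonable cross-norm:
(i) `N (a ⊗ x) = ‖a‖ ‖x‖`; (ii) `N` is dominated by the projective tensor norm;
(iii) `N` dominates the injective tensor norm. -/
theorem c0_norm_is_reasonable_cross_norm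
    (E : Type*) [NormedAddCommGroup E] [NormedSpace ℂ E]
    (N : TensorProduct ℂ C₀(ℕ, ℂ) E → ℝ)
    -- `N` is a norm:
    (N_eq_zero : ∀ τ, N τ = 0 ↔ τ = 0)
    (N_add : ∀ τ σ, N (τ + σ) ≤ N τ + N σ)
    (N_smul : ∀ (c : ℂ) τ, N (c • τ) = ‖c‖ * N τ)
    -- `N` is a `c₀`-norm:
    (N_delta : ∀ x : E, N (c0delta 0 ⊗ₜ[ℂ] x) = ‖x‖)
    (N_compact : ∀ T : C₀(ℕ, ℂ) →L[ℂ] C₀(ℕ, ℂ), IsCompactOperator T →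
      ∀ τ, N (TensorProduct.map (T : C₀(ℕ, ℂ) →ₗ[ℂ] C₀(ℕ, ℂ)) (LinearMap.id) τ) ≤ ‖T‖ * N τ) :
    -- (i) cross-norm:
    (∀ (a : C₀(ℕ, ℂ)) (x : E), N (a ⊗ₜ[ℂ] x) = ‖a‖ * ‖x‖) ∧
    -- (ii) dominated by the projective tensor norm:
    (∀ (k : ℕ) (a : Fin k → C₀(ℕ, ℂ)) (x : Fin k → E),
      N (∑ j, a j ⊗ₜ[ℂ] x j) ≤ ∑ j, ‖a j‖ * ‖x j‖) ∧
    -- (iii) dominates the injective tensor norm (reasonableness):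
    (∀ (lam : StrongDual ℂ C₀(ℕ, ℂ)) (mu : StrongDual ℂ E) (k : ℕ)
      (a : Fin k → C₀(ℕ, ℂ)) (x : Fin k → E),
      ‖∑ j, lam (a j) * mu (x j)‖ ≤ ‖lam‖ * ‖mu‖ * N (∑ j, a j ⊗ₜ[ℂ] x j)) := by
  -- N 0 = 0 and N is nonnegative
  have N_zero : N 0 = 0 := (N_eq_zero 0).mpr rfl
  have N_nonneg : ∀ τ, 0 ≤ N τ := by
    intro τ
    have h1 : N (-τ) = N τ := by
      rw [show -τ = (-1 : ℂ) • τ from (neg_one_smul ℂ τ).symm, N_smul]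
      simp
    have h2 : (0 : ℝ) ≤ N τ + N (-τ) := by
      have := N_add τ (-τ)
      rw [show τ + -τ = 0 from by abel, N_zero] at this
      linarith
    linarith [h2, h1]
  -- key: applying a rank-one operator
  have key : ∀ (lam : C₀(ℕ, ℂ) →L[ℂ] ℂ) (g : C₀(ℕ, ℂ)) (τ : TensorProduct ℂ C₀(ℕ, ℂ) E),
      N (TensorProduct.map ((lam.smulRight g : C₀(ℕ, ℂ) →L[ℂ] C₀(ℕ, ℂ)) :
        C₀(ℕ, ℂ) →ₗ[ℂ] C₀(ℕ, ℂ)) LinearMap.id τ) ≤ ‖lam‖ * ‖g‖ * N τ := by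
    intro lam g τ
    calc N (TensorProduct.map _ LinearMap.id τ)
        ≤ ‖lam.smulRight g‖ * N τ := N_compact _ (rankOne_isCompactOperator lam g) τ
      _ = ‖lam‖ * ‖g‖ * N τ := by rw [ContinuousLinearMap.norm_smulRight_apply]
  -- part (i)
  have part1 : ∀ (a : C₀(ℕ, ℂ)) (x : E), N (a ⊗ₜ[ℂ] x) = ‖a‖ * ‖x‖ := by
    intro a x
    -- upper bound
    have upper : N (a ⊗ₜ[ℂ] x) ≤ ‖a‖ * ‖x‖ := by
      have h := key (c0eval 0) a (c0delta 0 ⊗ₜ[ℂ] x)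
      have hmap : TensorProduct.map (((c0eval 0).smulRight a : C₀(ℕ, ℂ) →L[ℂ] C₀(ℕ, ℂ)) :
          C₀(ℕ, ℂ) →ₗ[ℂ] C₀(ℕ, ℂ)) LinearMap.id (c0delta 0 ⊗ₜ[ℂ] x) = a ⊗ₜ[ℂ] x := by
        rw [TensorProduct.map_tmul]
        simp only [ContinuousLinearMap.coe_coe, ContinuousLinearMap.smulRight_apply,
          LinearMap.id_coe, id_eq]
        rw [c0eval_apply]
        rw [show c0delta 0 0 = 1 from by rw [c0delta_apply]; simp]
        rw [one_smul]
      rw [hmap, N_delta] at h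
      calc N (a ⊗ₜ[ℂ] x) ≤ ‖c0eval 0‖ * ‖a‖ * ‖x‖ := h
        _ ≤ 1 * ‖a‖ * ‖x‖ := by
            apply mul_le_mul_of_nonneg_right _ (norm_nonneg x)
            exact mul_le_mul_of_nonneg_right (c0eval_norm_le 0) (norm_nonneg a)
        _ = ‖a‖ * ‖x‖ := by ring
    -- lower bound
    have lower : ‖a‖ * ‖x‖ ≤ N (a ⊗ₜ[ℂ] x) := by
      rcases eq_or_ne x 0 with rfl | hx
      · simp only [TensorProduct.tmul_zero, norm_zero, mul_zero]
        exact N_nonneg _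
      · have hxpos : (0 : ℝ) < ‖x‖ := norm_pos_iff.mpr hx
        have hn : ∀ n : ℕ, ‖a n‖ * ‖x‖ ≤ N (a ⊗ₜ[ℂ] x) := by
          intro n
          have h := key (c0eval n) (c0delta 0) (a ⊗ₜ[ℂ] x)
          have hmap : TensorProduct.map (((c0eval n).smulRight (c0delta 0) :
              C₀(ℕ, ℂ) →L[ℂ] C₀(ℕ, ℂ)) : C₀(ℕ, ℂ) →ₗ[ℂ] C₀(ℕ, ℂ)) LinearMap.id
              (a ⊗ₜ[ℂ] x) = c0delta 0 ⊗ₜ[ℂ] (a n • x) := by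
            rw [TensorProduct.map_tmul]
            simp only [ContinuousLinearMap.coe_coe, ContinuousLinearMap.smulRight_apply,
              LinearMap.id_coe, id_eq]
            rw [c0eval_apply, TensorProduct.smul_tmul]
          rw [hmap, N_delta, norm_smul, c0delta_norm, mul_one] at h
          calc ‖a n‖ * ‖x‖ ≤ ‖c0eval n‖ * N (a ⊗ₜ[ℂ] x) := h
            _ ≤ 1 * N (a ⊗ₜ[ℂ] x) :=
                mul_le_mul_of_nonneg_right (c0eval_norm_le n) (N_nonneg _)
            _ = N (a ⊗ₜ[ℂ] x) := one_mul _
        have ha : ‖a‖ ≤ N (a ⊗ₜ[ℂ] x) / ‖x‖ := by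
          rw [← ZeroAtInftyContinuousMap.norm_toBCF_eq_norm]
          refine BoundedContinuousFunction.norm_le
            (div_nonneg (N_nonneg _) hxpos.le) |>.mpr fun n => ?_
          rw [le_div_iff₀ hxpos]
          exact hn n
        calc ‖a‖ * ‖x‖ ≤ (N (a ⊗ₜ[ℂ] x) / ‖x‖) * ‖x‖ :=
              mul_le_mul_of_nonneg_right ha hxpos.le
          _ = N (a ⊗ₜ[ℂ] x) := div_mul_cancel₀ _ hxpos.ne'
    exact le_antisymm upper lower
  refine ⟨part1, ?_, ?_⟩
  -- part (ii)
  · intro k a x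
    have : ∀ (s : Finset (Fin k)), N (∑ j ∈ s, a j ⊗ₜ[ℂ] x j) ≤ ∑ j ∈ s, ‖a j‖ * ‖x j‖ := by
      intro s
      induction s using Finset.cons_induction with
      | empty => simp [N_zero]
      | cons i s hi ih =>
        rw [Finset.sum_cons, Finset.sum_cons]
        calc N (a i ⊗ₜ[ℂ] x i + ∑ j ∈ s, a j ⊗ₜ[ℂ] x j)
            ≤ N (a i ⊗ₜ[ℂ] x i) + N (∑ j ∈ s, a j ⊗ₜ[ℂ] x j) := N_add _ _
          _ ≤ ‖a i‖ * ‖x i‖ + ∑ j ∈ s, ‖a j‖ * ‖x j‖ := by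
              rw [part1]; exact add_le_add (le_refl _) ih
    exact this Finset.univ
  -- part (iii)
  · intro lam mu k a x
    set τ := ∑ j, a j ⊗ₜ[ℂ] x j with hτ
    have hmap : TensorProduct.map ((lam.smulRight (c0delta 0) : C₀(ℕ, ℂ) →L[ℂ] C₀(ℕ, ℂ)) :
        C₀(ℕ, ℂ) →ₗ[ℂ] C₀(ℕ, ℂ)) LinearMap.id τ
        = c0delta 0 ⊗ₜ[ℂ] (∑ j, lam (a j) • x j) := by
      rw [hτ, map_sum, TensorProduct.tmul_sum]
      refine Finset.sum_congr rfl fun j _ => ?_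
      rw [TensorProduct.map_tmul]
      simp only [ContinuousLinearMap.coe_coe, ContinuousLinearMap.smulRight_apply,
        LinearMap.id_coe, id_eq]
      rw [TensorProduct.smul_tmul]
    have h := key lam (c0delta 0) τ
    rw [hmap, N_delta, c0delta_norm, mul_one] at h
    have hmu : ∑ j, lam (a j) * mu (x j) = mu (∑ j, lam (a j) • x j) := by
      rw [map_sum]
      refine Finset.sum_congr rfl fun j _ => ?_
      rw [map_smul, smul_eq_mul]
    rw [hmu]
    calc ‖mu (∑ j, lam (a j) • x j)‖
        ≤ ‖mu‖ * ‖∑ j, lam (a j) • x j‖ := mu.le_opNorm _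
      _ ≤ ‖mu‖ * (‖lam‖ * N τ) := mul_le_mul_of_nonneg_left h (norm_nonneg mu)
      _ = ‖lam‖ * ‖mu‖ * N τ := by ring
end

section
/- Let E be a complex normed space equipped with a multi-norm (‖·‖ₙ : n ∈ ℕ), and equip ℓ¹ with its minimum multi-norm ‖(a₁,…,aₖ)‖ₖ^min = maxᵢ ‖aᵢ‖₁. Then for every bounded linear operator T : ℓ¹ → E one has (as elements of [0,∞]) ‖T‖_mb = mb{T(δ_k) : k ∈ ℕ} = mb(T(ℓ¹_{[1]})), where ℓ¹_{[1]} is the closed unit ball of ℓ¹ and (δ_k) is the standard basis of ℓ¹. In particular, T is multi-bounded if and only if {T(δ_k) : k ∈ ℕ} is multi-bounded. -/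
open scoped ENNReal

/-- A multi-norm based on a complex normed space `E`: a sequence of norms `‖·‖ₙ` on `Eⁿ`
agreeing with the norm of `E` at level 1 and satisfying axioms (A1)-(A4). -/
structure MultiNorm (E : Type*) [NormedAddCommGroup E] [NormedSpace ℂ E] where
  toFun : (n : ℕ) → (Fin n → E) → ℝ
  eq_zero_iff : ∀ (n : ℕ) (x : Fin n → E), toFun n x = 0 ↔ x = 0
  add_le : ∀ (n : ℕ) (x y : Fin n → E), toFun n (x + y) ≤ toFun n x + toFun n y
  smul_eq : ∀ (n : ℕ) (c : ℂ) (x : Fin n → E), toFun n (c • x) = ‖c‖ * toFun n x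
  level_one : ∀ x : E, toFun 1 (fun _ => x) = ‖x‖
  perm : ∀ (n : ℕ) (σ : Equiv.Perm (Fin n)) (x : Fin n → E), toFun n (x ∘ σ) = toFun n x
  scal : ∀ (n : ℕ) (α : Fin n → ℂ) (x : Fin n → E),
    toFun n (fun i => α i • x i) ≤ (⨆ i, ‖α i‖) * toFun n x
  drop : ∀ (n : ℕ) (x : Fin n → E), toFun (n + 1) (Fin.snoc x 0) = toFun n x
  dup : ∀ (n : ℕ) (x : Fin (n + 1) → E),
    toFun (n + 2) (Fin.snoc x (x (Fin.last n))) = toFun (n + 1) x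

/-- The multi-bound `mb(B) ∈ [0,∞]` of a subset `B` of a multi-normed space. -/
noncomputable def MultiNorm.mbSet {E : Type*} [NormedAddCommGroup E] [NormedSpace ℂ E]
    (M : MultiNorm E) (B : Set E) : ℝ≥0∞ :=
  ⨆ (n : ℕ) (x : Fin n → E) (_ : ∀ i, x i ∈ B), ENNReal.ofReal (M.toFun n x)

namespace MultiNorm

variable {E : Type*} [NormedAddCommGroup E] [NormedSpace ℂ E] (M : MultiNorm E)

lemma zero_eq (n : ℕ) : M.toFun n 0 = 0 := (M.eq_zero_iff n 0).2 rfl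

lemma neg_eq (n : ℕ) (x : Fin n → E) : M.toFun n (-x) = M.toFun n x := by
  have h := M.smul_eq n (-1) x
  simpa using h

lemma nonneg (n : ℕ) (x : Fin n → E) : 0 ≤ M.toFun n x := by
  have h := M.add_le n x (-x)
  rw [add_neg_cancel, M.zero_eq, M.neg_eq] at h
  linarith

lemma scal_le_one (n : ℕ) (α : Fin n → ℂ) (x : Fin n → E) (hα : ∀ i, ‖α i‖ ≤ 1) :
    M.toFun n (fun i => α i • x i) ≤ M.toFun n x := by
  refine (M.scal n α x).trans ?_
  have h1 : (⨆ i, ‖α i‖) ≤ 1 := Real.iSup_le (fun i => hα i) zero_le_one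
  calc (⨆ i, ‖α i‖) * M.toFun n x ≤ 1 * M.toFun n x :=
        mul_le_mul_of_nonneg_right h1 (M.nonneg n x)
    _ = M.toFun n x := one_mul _

lemma snoc_zero (n : ℕ) (v : E) : M.toFun (n + 1) (Fin.snoc 0 v) = ‖v‖ := by
  induction n with
  | zero =>
      have h : (Fin.snoc (0 : Fin 0 → E) v : Fin 1 → E) = fun _ => v := by
        funext i
        have : i = Fin.last 0 := Fin.ext (by omega)
        rw [this, Fin.snoc_last]
      rw [h, M.level_one]
  | succ n ih =>
      have key : (Fin.snoc (0 : Fin (n+1) → E) v : Fin (n+2) → E) ∘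
          (Equiv.swap (Fin.castSucc (Fin.last n)) (Fin.last (n+1)))
          = (Fin.snoc (Fin.snoc (0 : Fin n → E) v) (0 : E) : Fin (n+2) → E) := by
        funext i
        rcases eq_or_ne i (Fin.last (n+1)) with rfl | h1
        · simp [Equiv.swap_apply_right]
        rcases eq_or_ne i (Fin.castSucc (Fin.last n)) with rfl | h2
        · simp [Equiv.swap_apply_left]
        · show (Fin.snoc (0 : Fin (n+1) → E) v : Fin (n+2) → E)
            ((Equiv.swap (Fin.castSucc (Fin.last n)) (Fin.last (n+1))) i) = _
          conv_lhs => rw [Equiv.swap_apply_of_ne_of_ne h2 h1]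
          rcases Fin.exists_castSucc_eq.2 h1 with ⟨j, rfl⟩
          rw [Fin.snoc_castSucc]
          have hj : j ≠ Fin.last n := fun h => h2 (by rw [h])
          rcases Fin.exists_castSucc_eq.2 hj with ⟨t, rfl⟩
          rw [Fin.snoc_castSucc]
          simp
      have hperm := M.perm (n+2) (Equiv.swap (Fin.castSucc (Fin.last n)) (Fin.last (n+1)))
        (Fin.snoc (0 : Fin (n+1) → E) v)
      rw [key] at hperm
      show M.toFun (n+2) (Fin.snoc (0 : Fin (n+1) → E) v) = ‖v‖
      rw [← hperm, M.drop]
      exact ih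

lemma snoc_split (n : ℕ) (x : Fin n → E) (v : E) :
    (Fin.snoc x v : Fin (n+1) → E)
      = (Fin.snoc x 0 : Fin (n+1) → E) + (Fin.snoc (0 : Fin n → E) v : Fin (n+1) → E) := by
  funext i
  rcases eq_or_ne i (Fin.last n) with rfl | h1
  · simp
  · rcases Fin.exists_castSucc_eq.2 h1 with ⟨j, rfl⟩
    simp

lemma le_sum_norm (n : ℕ) (x : Fin n → E) : M.toFun n x ≤ ∑ i, ‖x i‖ := by
  induction n with
  | zero =>
      have : x = 0 := funext fun i => absurd i.2 (by omega)
      rw [this, M.zero_eq]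
      simp
  | succ n ih =>
      have hx : x = Fin.snoc (Fin.init x) (x (Fin.last n)) := (Fin.snoc_init_self x).symm
      calc M.toFun (n+1) x
          = M.toFun (n+1) ((Fin.snoc (Fin.init x) 0 : Fin (n+1) → E)
              + (Fin.snoc (0 : Fin n → E) (x (Fin.last n)) : Fin (n+1) → E)) := by
            rw [← snoc_split]; exact congrArg _ hx
        _ ≤ M.toFun (n+1) (Fin.snoc (Fin.init x) 0)
            + M.toFun (n+1) (Fin.snoc 0 (x (Fin.last n))) := M.add_le _ _ _
        _ = M.toFun n (Fin.init x) + ‖x (Fin.last n)‖ := by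
            rw [M.drop, M.snoc_zero]
        _ ≤ (∑ i, ‖Fin.init x i‖) + ‖x (Fin.last n)‖ := by
            have := ih (Fin.init x); linarith
        _ = ∑ i, ‖x i‖ := by
            rw [Fin.sum_univ_castSucc (f := fun i => ‖x i‖)]
            rfl

lemma close_le (n : ℕ) (x y : Fin n → E) :
    M.toFun n x ≤ M.toFun n y + ∑ i, ‖x i - y i‖ := by
  have hx : x = y + (x - y) := by abel
  calc M.toFun n x = M.toFun n (y + (x - y)) := by rw [← hx]
    _ ≤ M.toFun n y + M.toFun n (x - y) := M.add_le _ _ _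
    _ ≤ M.toFun n y + ∑ i, ‖x i - y i‖ := by
        have := M.le_sum_norm n (x - y)
        simpa using this

lemma discrete (C : ℝ) (hC : 0 ≤ C) :
    ∀ (N n m : ℕ) (v : Fin n → Fin m → E) (p : Fin n → Fin m → ℕ),
    (∀ i, ∑ j, p i j ≤ N) →
    (∀ g : Fin n → Fin m, M.toFun n (fun i => v i (g i)) ≤ C) →
    M.toFun n (fun i => ∑ j, (p i j : ℂ) • v i j) ≤ N * C := by
  intro N
  induction N with
  | zero =>
      intro n m v p hp _
      have hz : (fun i => ∑ j, (p i j : ℂ) • v i j) = (0 : Fin n → E) := by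
        funext i
        have h0 : ∀ j, p i j = 0 := by
          have h1 : ∑ j, p i j = 0 := Nat.le_zero.mp (hp i)
          intro j
          exact (Finset.sum_eq_zero_iff.mp h1) j (Finset.mem_univ j)
        simp [h0]
      rw [hz, M.zero_eq]
      simp
  | succ N ih =>
      intro n m v p hp hg
      rcases Nat.eq_zero_or_pos m with rfl | hm
      · have hz : (fun i => ∑ j : Fin 0, (p i j : ℂ) • v i j) = (0 : Fin n → E) := by
          funext i; simp
        rw [hz, M.zero_eq]
        positivity
      · have hdec : ∀ i : Fin n, ∃ (g : Fin m → ℕ) (ji : Fin m) (ei : ℕ), ei ≤ 1 ∧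
            (∀ j, p i j = g j + (if j = ji then ei else 0)) ∧ ∑ j, g j ≤ N := by
          intro i
          by_cases h : ∃ j, p i j ≠ 0
          · obtain ⟨j0, hj0⟩ := h
            refine ⟨fun j => p i j - (if j = j0 then 1 else 0), j0, 1, le_rfl, ?_, ?_⟩
            · intro j
              rcases eq_or_ne j j0 with rfl | hj
              · simp; omega
              · simp [hj]
            · have hsplit : ∑ j, p i j
                  = ∑ j, ((p i j - (if j = j0 then 1 else 0)) + (if j = j0 then 1 else 0)) := by
                refine Finset.sum_congr rfl fun j _ => ?_
                rcases eq_or_ne j j0 with rfl | hj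
                · simp; omega
                · simp [hj]
              have hle := hp i
              rw [hsplit, Finset.sum_add_distrib,
                Finset.sum_ite_eq' Finset.univ j0 (fun _ => 1)] at hle
              simp only [Finset.mem_univ, if_true] at hle
              simpa using Nat.le_of_add_le_add_right hle
          · push_neg at h
            exact ⟨p i, ⟨0, hm⟩, 0, Nat.zero_le 1, fun j => by simp [h j], by simp [h]⟩
        choose g ji ei hei hrep hsum using hdec
        have hsplit2 : (fun i => ∑ j, (p i j : ℂ) • v i j)
            = (fun i => ∑ j, (g i j : ℂ) • v i j) + (fun i => (ei i : ℂ) • v i (ji i)) := by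
          funext i
          have : ∀ j, (p i j : ℂ) • v i j
              = (g i j : ℂ) • v i j + (if j = ji i then (ei i : ℂ) else 0) • v i j := by
            intro j
            rw [← add_smul]
            congr 1
            rcases eq_or_ne j (ji i) with rfl | hj
            · rw [if_pos rfl]
              rw [hrep i (ji i), if_pos rfl]
              push_cast
              ring
            · rw [if_neg hj, add_zero, hrep i j, if_neg hj, add_zero]
          rw [Finset.sum_congr rfl (fun j _ => this j), Finset.sum_add_distrib]
          have : ∑ j, (if j = ji i then (ei i : ℂ) else 0) • v i j
              = (ei i : ℂ) • v i (ji i) := by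
            simp only [ite_smul, zero_smul]
            rw [Finset.sum_ite_eq' Finset.univ (ji i) (fun j => (ei i : ℂ) • v i j)]
            simp
          rw [this]
          rfl
        rw [hsplit2]
        have h1 : M.toFun n ((fun i => ∑ j, (g i j : ℂ) • v i j)
              + (fun i => (ei i : ℂ) • v i (ji i)))
            ≤ M.toFun n (fun i => ∑ j, (g i j : ℂ) • v i j)
              + M.toFun n (fun i => (ei i : ℂ) • v i (ji i)) := M.add_le _ _ _
        have h2 : M.toFun n (fun i => ∑ j, (g i j : ℂ) • v i j) ≤ N * C :=
          ih n m v g hsum hg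
        have h3 : M.toFun n (fun i => (ei i : ℂ) • v i (ji i)) ≤ C := by
          refine (M.scal_le_one n (fun i => (ei i : ℂ)) (fun i => v i (ji i)) ?_).trans (hg ji)
          intro i
          have : (ei i : ℝ) ≤ 1 := by exact_mod_cast hei i
          simpa [Complex.norm_natCast] using this
        calc M.toFun n _ ≤ N * C + C := by linarith
          _ = (N + 1 : ℕ) * C := by push_cast; ring

lemma aco (C : ℝ) (hC : 0 ≤ C) (n m : ℕ) (w : Fin m → E) (α : Fin n → Fin m → ℂ)
    (hα : ∀ i, ∑ j, ‖α i j‖ ≤ 1)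
    (hw : ∀ g : Fin n → Fin m, M.toFun n (fun i => w (g i)) ≤ C)
    (hwn : ∀ j, ‖w j‖ ≤ C) :
    M.toFun n (fun i => ∑ j, α i j • w j) ≤ C := by
  refine le_of_forall_pos_le_add fun ε hε => ?_
  obtain ⟨N, hN⟩ := exists_nat_gt ((n * m * C) / ε)
  have hNR : (0:ℝ) < N := lt_of_le_of_lt (by positivity) hN
  have hNpos : 0 < N := by exact_mod_cast hNR
  set ζ : Fin n → Fin m → ℂ := fun i j => if α i j = 0 then 0 else (‖α i j‖ : ℂ)⁻¹ * α i j
    with hζdef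
  have hζ : ∀ i j, ‖ζ i j‖ ≤ 1 := by
    intro i j
    rcases eq_or_ne (α i j) 0 with h | h
    · simp [hζdef, h]
    · have hne : ‖α i j‖ ≠ 0 := norm_ne_zero_iff.mpr h
      simp only [hζdef, if_neg h]
      rw [norm_mul]
      rw [norm_inv, Complex.norm_real, Real.norm_eq_abs, abs_of_nonneg (norm_nonneg _)]
      rw [inv_mul_cancel₀ hne]
  have hζα : ∀ i j, (‖α i j‖ : ℂ) * ζ i j = α i j := by
    intro i j
    rcases eq_or_ne (α i j) 0 with h | h
    · simp [hζdef, h]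
    · have hne : (‖α i j‖ : ℂ) ≠ 0 := by
        simpa using norm_ne_zero_iff.mpr h
      simp only [hζdef, if_neg h]
      rw [← mul_assoc, mul_inv_cancel₀ hne, one_mul]
  set p : Fin n → Fin m → ℕ := fun i j => ⌊(N:ℝ) * ‖α i j‖⌋₊ with hpdef
  have hp_le : ∀ i j, (p i j : ℝ) ≤ N * ‖α i j‖ := fun i j => Nat.floor_le (by positivity)
  have hp_ge : ∀ i j, (N:ℝ) * ‖α i j‖ < p i j + 1 := fun i j => Nat.lt_floor_add_one _
  have hpsum : ∀ i, ∑ j, p i j ≤ N := by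
    intro i
    have h1 : ((∑ j, p i j : ℕ) : ℝ) ≤ (N:ℝ) := by
      push_cast
      calc ∑ j, (p i j : ℝ) ≤ ∑ j, (N:ℝ) * ‖α i j‖ :=
            Finset.sum_le_sum fun j _ => hp_le i j
        _ = (N:ℝ) * ∑ j, ‖α i j‖ := by rw [Finset.mul_sum]
        _ ≤ (N:ℝ) * 1 := mul_le_mul_of_nonneg_left (hα i) (le_of_lt hNR)
        _ = (N:ℝ) := mul_one _
    exact_mod_cast h1
  set β : Fin n → Fin m → ℂ := fun i j => α i j - ((p i j : ℂ)/(N:ℂ)) * ζ i j with hβdef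
  have hβ : ∀ i j, ‖β i j‖ ≤ 1 / N := by
    intro i j
    have heq : β i j = (((‖α i j‖ - p i j / N : ℝ)) : ℂ) * ζ i j := by
      simp only [hβdef]
      push_cast
      rw [sub_mul, hζα i j]
    rw [heq, norm_mul, Complex.norm_real, Real.norm_eq_abs]
    have h1 : 0 ≤ ‖α i j‖ - p i j / N := by
      have hd : (p i j : ℝ)/N ≤ ‖α i j‖ := by
        rw [div_le_iff₀ hNR]
        nlinarith [hp_le i j]
      linarith
    have h2 : ‖α i j‖ - p i j / N ≤ 1 / N := by
      have hkey : ‖α i j‖ ≤ ((p i j : ℝ) + 1)/N := by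
        rw [le_div_iff₀ hNR]
        nlinarith [hp_ge i j]
      have he : ((p i j : ℝ) + 1)/N - (p i j : ℝ)/N = 1/N := by ring
      linarith
    calc |‖α i j‖ - p i j / N| * ‖ζ i j‖ ≤ (1/N) * 1 := by
          apply mul_le_mul _ (hζ i j) (norm_nonneg _) (by positivity)
          rwa [abs_of_nonneg h1]
      _ = 1 / N := mul_one _
  set main : Fin n → E := fun i => ∑ j, (p i j : ℂ) • (ζ i j • w j) with hmaindef
  set err : Fin n → E := fun i => ∑ j, β i j • w j with herrdef
  have hdecomp : ∀ i, ∑ j, α i j • w j = ((1/(N:ℂ)) • main) i + err i := by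
    intro i
    simp only [hmaindef, herrdef, Pi.smul_apply, Finset.smul_sum]
    rw [← Finset.sum_add_distrib]
    refine Finset.sum_congr rfl fun j _ => ?_
    rw [smul_smul, smul_smul, ← add_smul]
    congr 1
    simp only [hβdef]
    ring
  have hMmain : M.toFun n main ≤ N * C := by
    refine M.discrete C hC N n m (fun i j => ζ i j • w j) p hpsum ?_
    intro g
    exact (M.scal_le_one n (fun i => ζ i (g i)) (fun i => w (g i))
      (fun i => hζ i (g i))).trans (hw g)
  have herr : ∀ i, ‖err i‖ ≤ m * C / N := by
    intro i
    calc ‖err i‖ ≤ ∑ j, ‖β i j • w j‖ := norm_sum_le _ _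
      _ ≤ ∑ j : Fin m, (1/N) * C := by
          refine Finset.sum_le_sum fun j _ => ?_
          rw [norm_smul]
          exact mul_le_mul (hβ i j) (hwn j) (norm_nonneg _) (by positivity)
      _ = m * C / N := by
          rw [Finset.sum_const, Finset.card_univ, Fintype.card_fin]
          push_cast
          ring
  calc M.toFun n (fun i => ∑ j, α i j • w j)
      ≤ M.toFun n ((1/(N:ℂ)) • main) + ∑ i, ‖(fun i => ∑ j, α i j • w j) i
          - ((1/(N:ℂ)) • main) i‖ := M.close_le n _ _
    _ ≤ C + ε := by
        have h1 : M.toFun n ((1/(N:ℂ)) • main) ≤ C := by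
          rw [M.smul_eq]
          have hn : ‖(1/(N:ℂ))‖ = 1/N := by
            rw [norm_div, norm_one, Complex.norm_natCast]
          rw [hn]
          calc (1/(N:ℝ)) * M.toFun n main ≤ (1/N) * (N * C) := by
                apply mul_le_mul_of_nonneg_left hMmain (by positivity)
            _ = C := by field_simp
        have h2 : ∑ i, ‖(fun i => ∑ j, α i j • w j) i - ((1/(N:ℂ)) • main) i‖ ≤ ε := by
          calc ∑ i, ‖(fun i => ∑ j, α i j • w j) i - ((1/(N:ℂ)) • main) i‖
              = ∑ i, ‖err i‖ := by
                refine Finset.sum_congr rfl fun i _ => ?_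
                show ‖(∑ j, α i j • w j) - ((1/(N:ℂ)) • main) i‖ = ‖err i‖
                rw [hdecomp i]
                congr 1
                abel
            _ ≤ ∑ i : Fin n, m * C / N := Finset.sum_le_sum fun i _ => herr i
            _ = n * m * C / N := by
                rw [Finset.sum_const, Finset.card_univ, Fintype.card_fin]
                push_cast
                ring
            _ ≤ ε := by
                rw [div_le_iff₀ hNR]
                rw [div_lt_iff₀ hε] at hN
                nlinarith
        linarith

lemma key (C : ℝ) (hC : 0 ≤ C) (u : ℕ → E)
    (hu : ∀ (n : ℕ) (f : Fin n → ℕ), M.toFun n (fun i => u (f i)) ≤ C)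
    (T : lp (fun _ : ℕ => ℂ) 1 →L[ℂ] E) (hT : ∀ t : ℕ, T (lp.single 1 t 1) = u t)
    (k : ℕ) (x : Fin k → lp (fun _ : ℕ => ℂ) 1) (hx : ∀ i, ‖x i‖ ≤ 1) :
    M.toFun k (fun i => T (x i)) ≤ C := by
  classical
  refine le_of_forall_pos_le_add fun ε hε => ?_
  set ε' := ε / ((k+1) * (‖T‖+1)) with hε'def
  have hε' : 0 < ε' := by positivity
  have happrox : ∀ i : Fin k, ∃ F : Finset ℕ, ∀ G : Finset ℕ, F ≤ G →
      ‖x i - ∑ t ∈ G, lp.single 1 t (x i t)‖ ≤ ε' := by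
    intro i
    have hs := lp.hasSum_single (by norm_num : (1:ℝ≥0∞) ≠ ⊤) (x i)
    rw [HasSum] at hs
    have hev := Metric.tendsto_nhds.mp hs ε' hε'
    change ∀ᶠ G in Filter.atTop, _ at hev
    rw [Filter.eventually_atTop] at hev
    obtain ⟨F, hF⟩ := hev
    refine ⟨F, fun G hG => ?_⟩
    have hd := hF G hG
    rw [dist_eq_norm] at hd
    rw [norm_sub_rev]
    exact hd.le
  choose F₀ hF₀ using happrox
  set F : Finset ℕ := Finset.univ.sup F₀ with hFdef
  set m := F.card with hm
  set e : Fin m ≃ {t // t ∈ F} := F.equivFin.symm with hedef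
  set w : Fin m → E := fun j => u (e j) with hwdef
  set α : Fin k → Fin m → ℂ := fun i j => x i ((e j : ℕ)) with hαdef
  have hnormsum : ∀ i, ∑ j, ‖α i j‖ ≤ 1 := by
    intro i
    have h1 : ∑ j : Fin m, ‖α i j‖ = ∑ t ∈ F, ‖x i t‖ :=
      (Equiv.sum_comp e (fun t : {t // t ∈ F} => ‖x i (t : ℕ)‖)).trans
        (Finset.sum_coe_sort F (fun t => ‖x i t‖))
    have h2 : HasSum (fun t : ℕ => ‖x i t‖) ‖x i‖ := by
      have := lp.hasSum_norm (p := 1) (by norm_num) (x i)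
      simpa using this
    rw [h1]
    exact le_trans (sum_le_hasSum F (fun t _ => norm_nonneg _) h2) (hx i)
  have hwm : ∀ g : Fin k → Fin m, M.toFun k (fun i => w (g i)) ≤ C := fun g =>
    hu k (fun i => ((e (g i) : ℕ)))
  have hwn : ∀ j, ‖w j‖ ≤ C := by
    intro j
    have h := hu 1 (fun _ => (e j : ℕ))
    rw [M.level_one (u ((e j : ℕ)))] at h
    exact h
  have hTsum : ∀ i, ∑ j, α i j • w j = T (∑ t ∈ F, lp.single 1 t (x i t)) := by
    intro i
    rw [map_sum]
    rw [← Finset.sum_coe_sort F (fun t => T (lp.single 1 t (x i t)))]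
    rw [← Equiv.sum_comp e (fun t : {t // t ∈ F} => T (lp.single 1 (t:ℕ) (x i (t:ℕ))))]
    refine Finset.sum_congr rfl fun j _ => ?_
    have hsingle : lp.single 1 ((e j : ℕ)) (x i ((e j : ℕ)))
        = ((x i ((e j : ℕ)) : ℂ)) • (lp.single 1 ((e j : ℕ)) (1:ℂ) : lp (fun _ : ℕ => ℂ) 1) := by
      rw [← lp.single_smul, smul_eq_mul, mul_one]
    show α i j • w j = T (lp.single 1 ((e j : ℕ)) (x i ((e j : ℕ))))
    rw [hsingle, map_smul, hT]
  have hclose : ∀ i, ‖T (x i) - ∑ j, α i j • w j‖ ≤ ‖T‖ * ε' := by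
    intro i
    rw [hTsum i, ← map_sub]
    calc ‖T (x i - ∑ t ∈ F, lp.single 1 t (x i t))‖
        ≤ ‖T‖ * ‖x i - ∑ t ∈ F, lp.single 1 t (x i t)‖ := T.le_opNorm _
      _ ≤ ‖T‖ * ε' := mul_le_mul_of_nonneg_left
          (hF₀ i F (Finset.le_sup (Finset.mem_univ i))) (norm_nonneg _)
  calc M.toFun k (fun i => T (x i))
      ≤ M.toFun k (fun i => ∑ j, α i j • w j)
        + ∑ i, ‖T (x i) - ∑ j, α i j • w j‖ := M.close_le k _ _
    _ ≤ C + ε := by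
        have h1 := M.aco C hC k m w α hnormsum hwm hwn
        have h2 : ∑ i : Fin k, ‖T (x i) - ∑ j, α i j • w j‖ ≤ k * (‖T‖ * ε') := by
          calc ∑ i : Fin k, ‖T (x i) - ∑ j, α i j • w j‖
              ≤ ∑ _i : Fin k, ‖T‖ * ε' := Finset.sum_le_sum fun i _ => hclose i
            _ = k * (‖T‖ * ε') := by
                rw [Finset.sum_const, Finset.card_univ, Fintype.card_fin]
                simp [nsmul_eq_mul]
        have h3 : (k:ℝ) * (‖T‖ * ε') ≤ ε := by
          rw [hε'def]
          rw [div_eq_mul_inv]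
          have hk1 : (0:ℝ) < (k+1) * (‖T‖+1) := by positivity
          have : (k:ℝ) * ‖T‖ ≤ (k+1) * (‖T‖+1) := by nlinarith [norm_nonneg T]
          rw [mul_comm ε]
          rw [← mul_assoc, ← mul_assoc]
          calc (k:ℝ) * ‖T‖ * ((k+1) * (‖T‖+1))⁻¹ * ε
              ≤ ((k:ℝ)+1) * (‖T‖+1) * ((k+1) * (‖T‖+1))⁻¹ * ε := by
                apply mul_le_mul_of_nonneg_right _ hε.le
                apply mul_le_mul_of_nonneg_right this (by positivity)
            _ = ε := by
                rw [mul_inv_cancel₀ (ne_of_gt hk1), one_mul]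
        linarith

end MultiNorm

/-- for ℓ¹ equipped with its minimum multi-norm
`‖(a₁,…,aₖ)‖ₖ^min = maxᵢ ‖aᵢ‖₁` and `E` a multi-normed space, the multi-bounded norm of any
`T ∈ B(ℓ¹, E)`, namely `sup_k ‖T^{(k)}‖` (computed in `[0,∞]`), equals the multi-bound of
`{T δ_k : k ∈ ℕ}` and also equals the multi-bound of the image of the closed unit ball. -/
theorem multibounded_operator_from_l1
    (E : Type*) [NormedAddCommGroup E] [NormedSpace ℂ E] (M : MultiNorm E)
    (T : lp (fun _ : ℕ => ℂ) 1 →L[ℂ] E) :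
    (⨆ (k : ℕ) (x : Fin k → lp (fun _ : ℕ => ℂ) 1) (_ : (⨆ i, ‖x i‖) ≤ 1),
        ENNReal.ofReal (M.toFun k fun i => T (x i)))
      = M.mbSet {y : E | ∃ k : ℕ, y = T (lp.single 1 k 1)} ∧
    (⨆ (k : ℕ) (x : Fin k → lp (fun _ : ℕ => ℂ) 1) (_ : (⨆ i, ‖x i‖) ≤ 1),
        ENNReal.ofReal (M.toFun k fun i => T (x i)))
      = M.mbSet (T '' Metric.closedBall 0 1) := by
  classical
  set u : ℕ → E := fun t => T (lp.single 1 t 1) with hudef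
  have hxle_of : ∀ (k : ℕ) (x : Fin k → lp (fun _ : ℕ => ℂ) 1),
      (⨆ i, ‖x i‖) ≤ 1 → ∀ i, ‖x i‖ ≤ 1 := by
    intro k x hx i
    exact le_trans (le_ciSup (f := fun i => ‖x i‖) (Set.Finite.bddAbove (Set.finite_range _)) i) hx
  have h_le_ball : (⨆ (k : ℕ) (x : Fin k → lp (fun _ : ℕ => ℂ) 1) (_ : (⨆ i, ‖x i‖) ≤ 1),
        ENNReal.ofReal (M.toFun k fun i => T (x i)))
      ≤ M.mbSet (T '' Metric.closedBall 0 1) := by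
    refine iSup_le fun k => iSup_le fun x => iSup_le fun hx => ?_
    have hmem : ∀ i, T (x i) ∈ T '' Metric.closedBall 0 1 := by
      intro i
      exact ⟨x i, by simpa [Metric.mem_closedBall, dist_zero_right] using hxle_of k x hx i, rfl⟩
    exact le_iSup_of_le k (le_iSup_of_le (fun i => T (x i)) (le_iSup_of_le hmem le_rfl))
  have h_ball_le : M.mbSet (T '' Metric.closedBall 0 1)
      ≤ (⨆ (k : ℕ) (x : Fin k → lp (fun _ : ℕ => ℂ) 1) (_ : (⨆ i, ‖x i‖) ≤ 1),
        ENNReal.ofReal (M.toFun k fun i => T (x i))) := by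
    refine iSup_le fun n => iSup_le fun y => iSup_le fun hy => ?_
    choose x hx1 hx2 using hy
    have hsup : (⨆ i, ‖x i‖) ≤ 1 := Real.iSup_le
      (fun i => by simpa [Metric.mem_closedBall, dist_zero_right] using hx1 i) zero_le_one
    have heq : (fun i => T (x i)) = y := funext hx2
    refine le_iSup_of_le n (le_iSup_of_le x (le_iSup_of_le hsup ?_))
    exact le_of_eq (by rw [heq])
  have h_delta_le : M.mbSet {y : E | ∃ k : ℕ, y = T (lp.single 1 k 1)}
      ≤ (⨆ (k : ℕ) (x : Fin k → lp (fun _ : ℕ => ℂ) 1) (_ : (⨆ i, ‖x i‖) ≤ 1),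
        ENNReal.ofReal (M.toFun k fun i => T (x i))) := by
    refine iSup_le fun n => iSup_le fun y => iSup_le fun hy => ?_
    choose f hf using hy
    set x : Fin n → lp (fun _ : ℕ => ℂ) 1 := fun i => lp.single 1 (f i) 1 with hxdef
    have hxnorm : ∀ i, ‖x i‖ = 1 := by
      intro i
      have := lp.norm_single (p := 1) (E := fun _ : ℕ => ℂ) (by norm_num)
        (f i) (1:ℂ)
      simpa [hxdef] using this
    have hsup : (⨆ i, ‖x i‖) ≤ 1 := Real.iSup_le (fun i => (hxnorm i).le) zero_le_one
    refine le_iSup_of_le n (le_iSup_of_le x (le_iSup_of_le hsup ?_))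
    refine le_of_eq ?_
    have : (fun i => T (x i)) = y := funext fun i => (hf i).symm
    rw [this]
  have h_S_le_delta : (⨆ (k : ℕ) (x : Fin k → lp (fun _ : ℕ => ℂ) 1) (_ : (⨆ i, ‖x i‖) ≤ 1),
        ENNReal.ofReal (M.toFun k fun i => T (x i)))
      ≤ M.mbSet {y : E | ∃ k : ℕ, y = T (lp.single 1 k 1)} := by
    by_cases hA : M.mbSet {y : E | ∃ k : ℕ, y = T (lp.single 1 k 1)} = ⊤
    · rw [hA]; exact le_top
    · set C := (M.mbSet {y : E | ∃ k : ℕ, y = T (lp.single 1 k 1)}).toReal with hCdef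
      have hC : 0 ≤ C := ENNReal.toReal_nonneg
      have hu : ∀ (n : ℕ) (f : Fin n → ℕ), M.toFun n (fun i => u (f i)) ≤ C := by
        intro n f
        have hle : ENNReal.ofReal (M.toFun n (fun i => u (f i)))
            ≤ M.mbSet {y : E | ∃ k : ℕ, y = T (lp.single 1 k 1)} :=
          le_iSup_of_le n (le_iSup_of_le (fun i => u (f i))
            (le_iSup_of_le (fun i => ⟨f i, rfl⟩) le_rfl))
        rw [← ENNReal.ofReal_toReal hA] at hle
        exact (ENNReal.ofReal_le_ofReal_iff hC).mp hle
      refine iSup_le fun k => iSup_le fun x => iSup_le fun hx => ?_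
      have hkey := M.key C hC u hu T (fun t => rfl) k x (hxle_of k x hx)
      calc ENNReal.ofReal (M.toFun k fun i => T (x i)) ≤ ENNReal.ofReal C :=
            ENNReal.ofReal_le_ofReal hkey
        _ = M.mbSet {y : E | ∃ k : ℕ, y = T (lp.single 1 k 1)} := ENNReal.ofReal_toReal hA
  exact ⟨le_antisymm h_S_le_delta h_delta_le, le_antisymm h_le_ball h_ball_le⟩
end

section
/- Let (Ω,μ) be a measure space, let p ∈ [1,∞), let n ∈ ℕ, and let f₁,…,fₙ ∈ L^p(Ω). Then sup{(Σᵢ₌₁ⁿ ‖χ_{Xᵢ}fᵢ‖_p^p)^{1/p} : {X₁,…,Xₙ} a measurable partition of Ω} = (∫_Ω maxᵢ |fᵢ(t)|^p dμ(t))^{1/p}; that is, the standard p-multi-norm ‖(f₁,…,fₙ)‖ₙ^{[p]} equals the L^p-norm of the pointwise maximum |f₁| ∨ ⋯ ∨ |fₙ|. -/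
open MeasureTheory
open scoped ENNReal

/-- for a measure space `(Ω,μ)`, `p ∈ [1,∞)` and `f₁,…,fₙ ∈ L^p(Ω)`, the
standard `p`-multi-norm `‖(f₁,…,fₙ)‖ₙ^{[p]}`, i.e. the supremum over measurable
partitions `{X₁,…,Xₙ}` of `Ω` of `(Σᵢ ‖χ_{Xᵢ} fᵢ‖_p^p)^{1/p}`, equals the `L^p`-norm
`(∫_Ω maxᵢ |fᵢ|^p dμ)^{1/p}` of the pointwise maximum `|f₁| ∨ ⋯ ∨ |fₙ|`. -/
theorem standard_p_multinorm_eq_lattice_norm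
    {α : Type*} [MeasurableSpace α] (μ : Measure α)
    (p : ℝ) (hp : 1 ≤ p) (n : ℕ) (hn : 0 < n)
    (f : Fin n → Lp ℂ (ENNReal.ofReal p) μ) :
    sSup {r : ℝ | ∃ X : Fin n → Set α,
        (∀ i, MeasurableSet (X i)) ∧ Pairwise (Function.onFun Disjoint X) ∧
        (⋃ i, X i) = Set.univ ∧
        r = (∑ i, (eLpNorm (f i) (ENNReal.ofReal p) (μ.restrict (X i))).toReal ^ p) ^ (1 / p)}
      = ((∫⁻ t, (⨆ i, (‖(f i : α → ℂ) t‖₊ : ℝ≥0∞)) ^ p ∂μ) ^ (1 / p)).toReal := by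
  classical
  have hp0 : (0:ℝ) < p := lt_of_lt_of_le one_pos hp
  have hq0 : ENNReal.ofReal p ≠ 0 := by
    simp only [ne_eq, ENNReal.ofReal_eq_zero, not_le]; linarith
  have hqt : ENNReal.ofReal p ≠ ∞ := ENNReal.ofReal_ne_top
  have hqr : (ENNReal.ofReal p).toReal = p := ENNReal.toReal_ofReal hp0.le
  have hne : Nonempty (Fin n) := ⟨⟨0, hn⟩⟩
  set F : Fin n → α → ℂ := fun i => (f i : α → ℂ) with hF
  set e : Fin n → Set α → ℝ≥0∞ :=
    fun i X => ∫⁻ t in X, (‖F i t‖₊ : ℝ≥0∞) ^ p ∂μ with he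
  set I : ℝ≥0∞ := ∫⁻ t, (⨆ i, (‖F i t‖₊ : ℝ≥0∞)) ^ p ∂μ with hI
  -- each ∫ ‖f i‖^p is finite
  have htot : ∀ i, (∫⁻ t, (‖F i t‖₊ : ℝ≥0∞) ^ p ∂μ) ≠ ∞ := by
    intro i
    have h1 := Lp.eLpNorm_ne_top (f i)
    rw [eLpNorm_eq_lintegral_rpow_enorm_toReal hq0 hqt, hqr] at h1
    intro hc
    rw [show (∫⁻ x, ‖(f i : α → ℂ) x‖ₑ ^ p ∂μ) = ∞ from hc, ENNReal.top_rpow_of_pos (by positivity)] at h1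
    exact h1 rfl
  have hefin : ∀ i (X : Set α), e i X ≠ ∞ := fun i X =>
    ne_top_of_le_ne_top (htot i) (setLIntegral_le_lintegral _ _)
  -- I is finite
  have hIfin : I ≠ ∞ := by
    have hptwise : ∀ t, (⨆ i, (‖F i t‖₊ : ℝ≥0∞)) ^ p ≤ ∑ i, (‖F i t‖₊ : ℝ≥0∞) ^ p := by
      intro t
      obtain ⟨i₀, hi₀⟩ := Finite.exists_max (fun i => (‖F i t‖₊ : ℝ≥0∞))
      calc (⨆ i, (‖F i t‖₊ : ℝ≥0∞)) ^ p ≤ ((‖F i₀ t‖₊ : ℝ≥0∞)) ^ p :=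
            ENNReal.rpow_le_rpow (iSup_le hi₀) hp0.le
        _ ≤ ∑ i, (‖F i t‖₊ : ℝ≥0∞) ^ p :=
            Finset.single_le_sum (f := fun i => (‖F i t‖₊ : ℝ≥0∞) ^ p)
              (fun i _ => zero_le) (Finset.mem_univ i₀)
    have ham : ∀ i, AEMeasurable (fun t => (‖F i t‖₊ : ℝ≥0∞) ^ p) μ := by
      intro i
      exact (Lp.aestronglyMeasurable (f i)).enorm.pow_const p
    have hle : I ≤ ∑ i, ∫⁻ t, (‖F i t‖₊ : ℝ≥0∞) ^ p ∂μ := by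
      rw [← lintegral_finset_sum' _ fun i _ => ham i]
      exact lintegral_mono hptwise
    exact ne_top_of_le_ne_top (ENNReal.sum_ne_top.mpr fun i _ => htot i) hle
  -- rewrite eLpNorm in terms of e
  have hsnorm : ∀ i (X : Set α),
      (eLpNorm (f i) (ENNReal.ofReal p) (μ.restrict X)).toReal ^ p = (e i X).toReal := by
    intro i X
    rw [eLpNorm_eq_lintegral_rpow_enorm_toReal hq0 hqt, hqr, ENNReal.toReal_rpow,
        ← ENNReal.rpow_mul, one_div_mul_cancel hp0.ne', ENNReal.rpow_one]
    rfl
  have hrw : ∀ (X : Fin n → Set α),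
      (∑ i, (eLpNorm (f i) (ENNReal.ofReal p) (μ.restrict (X i))).toReal ^ p) ^ (1/p)
        = ((∑ i, e i (X i)) ^ (1/p)).toReal := by
    intro X
    rw [Finset.sum_congr rfl fun i _ => hsnorm i (X i),
        ← ENNReal.toReal_sum fun i _ => hefin i (X i), ENNReal.toReal_rpow]
  -- upper bound for any partition
  have hle : ∀ (Y : Fin n → Set α), (∀ i, MeasurableSet (Y i)) →
      Pairwise (Function.onFun Disjoint Y) → (⋃ i, Y i) = Set.univ →
      ∑ i, e i (Y i) ≤ I := by
    intro Y hm hd hu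
    calc ∑ i, e i (Y i)
        ≤ ∑ i, ∫⁻ t in Y i, (⨆ j, (‖F j t‖₊ : ℝ≥0∞)) ^ p ∂μ :=
          Finset.sum_le_sum fun i _ => lintegral_mono fun t =>
            ENNReal.rpow_le_rpow (le_iSup (fun j => (‖F j t‖₊ : ℝ≥0∞)) i) hp0.le
      _ = ∫⁻ t in ⋃ i, Y i, (⨆ j, (‖F j t‖₊ : ℝ≥0∞)) ^ p ∂μ := by
          rw [lintegral_iUnion hm hd, tsum_fintype]
      _ = I := by rw [hu, Measure.restrict_univ]
  -- measurable representatives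
  set g : Fin n → α → ℂ := fun i => (Lp.aestronglyMeasurable (f i)).mk _ with hgdef
  have hgm : ∀ i, Measurable fun t => ‖g i t‖ := fun i =>
    (Lp.aestronglyMeasurable (f i)).stronglyMeasurable_mk.measurable.norm
  have hge : ∀ i, F i =ᵐ[μ] g i := fun i => (Lp.aestronglyMeasurable (f i)).ae_eq_mk
  -- the argmax partition
  set X : Fin n → Set α := fun i =>
    {t | (∀ j, ‖g j t‖ ≤ ‖g i t‖) ∧ ∀ j, j < i → ‖g j t‖ < ‖g i t‖} with hXdef
  have hXm : ∀ i, MeasurableSet (X i) := by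
    intro i
    simp only [hXdef, Set.setOf_and, Set.setOf_forall]
    exact (MeasurableSet.iInter fun j => measurableSet_le (hgm j) (hgm i)).inter
      (MeasurableSet.iInter fun j => MeasurableSet.iInter fun _ =>
        measurableSet_lt (hgm j) (hgm i))
  have hXd : Pairwise (Function.onFun Disjoint X) := by
    intro i j hij
    simp only [Function.onFun, Set.disjoint_left]
    intro t hti htj
    rcases lt_or_gt_of_ne hij with h | h
    · exact absurd (hti.1 j) (not_le.mpr (htj.2 i h))
    · exact absurd (htj.1 i) (not_le.mpr (hti.2 j h))
  have hXu : (⋃ i, X i) = Set.univ := by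
    ext t
    simp only [Set.mem_iUnion, Set.mem_univ, iff_true]
    obtain ⟨i₀, hi₀⟩ := Finite.exists_max (fun i => ‖g i t‖)
    let S : Finset (Fin n) := Finset.univ.filter fun i => ∀ j, ‖g j t‖ ≤ ‖g i t‖
    have hS : S.Nonempty :=
      ⟨i₀, by simp only [S, Finset.mem_filter, Finset.mem_univ, true_and]; exact hi₀⟩
    have hmax : ∀ k, ‖g k t‖ ≤ ‖g (S.min' hS) t‖ := by
      have := S.min'_mem hS
      simpa [S] using this
    refine ⟨S.min' hS, hmax, ?_⟩
    intro j hj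
    by_contra hcon
    push_neg at hcon
    have hjS : j ∈ S := by
      simp only [S, Finset.mem_filter, Finset.mem_univ, true_and]
      exact fun k => le_trans (hmax k) hcon
    exact absurd (S.min'_le j hjS) (not_le.mpr hj)
  have hsup : ∀ i, ∀ t ∈ X i, (⨆ j, (‖g j t‖₊ : ℝ≥0∞)) = (‖g i t‖₊ : ℝ≥0∞) := by
    intro i t ht
    refine le_antisymm (iSup_le fun j => ?_) (le_iSup (fun j => (‖g j t‖₊ : ℝ≥0∞)) i)
    exact ENNReal.coe_le_coe.mpr (by simpa [← NNReal.coe_le_coe] using ht.1 j)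
  -- the key equality for the argmax partition
  have hkey : ∑ i, e i (X i) = I := by
    have hstep : ∀ i, e i (X i) = ∫⁻ t in X i, (⨆ j, (‖g j t‖₊ : ℝ≥0∞)) ^ p ∂μ := by
      intro i
      have h1 : e i (X i) = ∫⁻ t in X i, (‖g i t‖₊ : ℝ≥0∞) ^ p ∂μ :=
        lintegral_congr_ae (ae_restrict_of_ae ((hge i).mono fun t ht => by simp only [ht]))
      rw [h1]
      exact (setLIntegral_congr_fun (hXm i)
        (fun t ht => by rw [hsup i t ht])).symm
    rw [Finset.sum_congr rfl fun i _ => hstep i, ← tsum_fintype (L := SummationFilter.unconditional _),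
        ← lintegral_iUnion hXm hXd, hXu, Measure.restrict_univ, hI]
    refine lintegral_congr_ae ?_
    have hall : ∀ᵐ t ∂μ, ∀ i, F i t = g i t := ae_all_iff.mpr hge
    filter_upwards [hall] with t ht
    simp only [ht]
  -- conclude
  refine IsGreatest.csSup_eq ⟨⟨X, hXm, hXd, hXu, by rw [hrw, hkey]⟩, ?_⟩
  rintro r ⟨Y, hYm, hYd, hYu, rfl⟩
  rw [hrw]
  exact ENNReal.toReal_mono (ENNReal.rpow_ne_top_of_nonneg (by positivity) hIfin)
    (ENNReal.rpow_le_rpow (hle Y hYm hYd hYu) (by positivity))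
end

section
/- Let E be a complex Banach space, take p ∈ [1,∞) with conjugate index p' (1/p + 1/p' = 1, with p' = ∞ when p = 1), and let (Ω,μ) be a measure space such that L^p(Ω) is infinite-dimensional (equivalently: for every n ∈ ℕ there exist pairwise disjoint measurable subsets X₁,…,Xₙ of Ω with 0 < μ(Xᵢ) < ∞). Then for each n ∈ ℕ, the set Bₙ = {(T'φ₁,…,T'φₙ) : T ∈ B(E, L^p(Ω)), ‖T‖ ≤ 1, φ₁,…,φₙ ∈ L^{p'}(Ω), ‖φᵢ‖ ≤ 1, with the supports of φ₁,…,φₙ pairwise disjoint} equals the set {(λ₁,…,λₙ) ∈ (E')ⁿ : μ_{p,n}(λ₁,…,λₙ) ≤ 1}. Here T' denotes the adjoint of T. -/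
open MeasureTheory NormedSpace
open scoped ENNReal

variable {E : Type*} [NormedAddCommGroup E] [NormedSpace ℂ E]

/-- The weak `p`-summing norm `μ_{p,n}` of a tuple of functionals on `E`,
computed over the unit ball of `E`. -/
noncomputable def muPN (p : ℝ) {n : ℕ} (lam : Fin n → StrongDual ℂ E) : ℝ :=
  sSup {r : ℝ | ∃ x : E, ‖x‖ ≤ 1 ∧ r = (∑ i, ‖lam i x‖ ^ p) ^ (1 / p)}

section Aux

variable {α : Type*} [MeasurableSpace α] {μ : Measure α}

theorem lpCoeFnSum {p : ℝ≥0∞} {ι : Type*} [DecidableEq ι]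
    (f : ι → Lp ℂ p μ) (s : Finset ι) :
    ⇑(∑ i ∈ s, f i) =ᵐ[μ] fun t => ∑ i ∈ s, (f i : α → ℂ) t := by
  induction s using Finset.induction with
  | empty => simp only [Finset.sum_empty]; exact Lp.coeFn_zero ℂ p μ
  | @insert a s h ih =>
      rw [Finset.sum_insert h]
      filter_upwards [Lp.coeFn_add (f a) (∑ i ∈ s, f i), ih] with t h1 h2
      simp only [h1, Pi.add_apply, h2, Finset.sum_insert h]

set_option linter.unusedSectionVars false in
/-- pointwise enorm-power of a sum of indicators with disjoint sets -/
theorem sumIndPow {n : ℕ} {X : Fin n → Set α} (hd : Pairwise (Function.onFun Disjoint X))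
    (b : Fin n → ℂ) {q : ℝ} (hq : 0 < q) (t : α) :
    (‖∑ i, (X i).indicator (fun _ => b i) t‖₊ : ℝ≥0∞) ^ q
      = ∑ i, (X i).indicator (fun _ => (‖b i‖₊ : ℝ≥0∞) ^ q) t := by
  by_cases hex : ∃ j, t ∈ X j
  · obtain ⟨j, hj⟩ := hex
    have h1 : ∀ i, i ≠ j → (X i).indicator (fun _ => b i) t = 0 := fun i hij =>
      Set.indicator_of_notMem (fun ht => Set.disjoint_left.mp (hd hij) ht hj) _
    have h2 : ∀ i, i ≠ j → (X i).indicator (fun _ => (‖b i‖₊ : ℝ≥0∞) ^ q) t = 0 := fun i hij =>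
      Set.indicator_of_notMem (fun ht => Set.disjoint_left.mp (hd hij) ht hj) _
    rw [Finset.sum_eq_single j (fun i _ hij => h1 i hij) (fun h => absurd (Finset.mem_univ j) h),
      Finset.sum_eq_single j (fun i _ hij => h2 i hij) (fun h => absurd (Finset.mem_univ j) h),
      Set.indicator_of_mem hj, Set.indicator_of_mem hj]
  · push_neg at hex
    simp [Set.indicator_of_notMem (hex _), ENNReal.zero_rpow_of_pos hq]

/-- `eLpNorm` of a sum of indicators of disjoint sets -/
theorem eLpNormSumInd {p : ℝ≥0∞} (hp0 : p ≠ 0) (hpt : p ≠ ∞) {n : ℕ} {X : Fin n → Set α}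
    (hXm : ∀ i, MeasurableSet (X i)) (hd : Pairwise (Function.onFun Disjoint X))
    (b : Fin n → ℂ) :
    eLpNorm (fun t => ∑ i, (X i).indicator (fun _ => b i) t) p μ
      = (∑ i, (‖b i‖₊ : ℝ≥0∞) ^ p.toReal * μ (X i)) ^ (1 / p.toReal) := by
  have hq : 0 < p.toReal := ENNReal.toReal_pos hp0 hpt
  rw [eLpNorm_eq_lintegral_rpow_enorm_toReal hp0 hpt]
  congr 1
  simp only [enorm_eq_nnnorm]
  rw [lintegral_congr (fun t => sumIndPow hd b hq t),
    lintegral_finset_sum _ (fun i _ => Measurable.indicator measurable_const (hXm i))]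
  exact Finset.sum_congr rfl fun i _ => lintegral_indicator_const (hXm i) _

end Aux

/-- let `E` be a complex Banach space, `p ∈ [1,∞)` with conjugate index
`p'`, and `(Ω,μ)` a measure space with `L^p(Ω)` infinite-dimensional. Then for each `n`,
the set `Bₙ` of tuples `(T'φ₁,…,T'φₙ)`, where `T ∈ B(E, L^p(Ω))_{[1]}` and the
`φᵢ ∈ L^{p'}(Ω)_{[1]}` have pairwise disjoint supports, coincides with the set of tuples
`(λ₁,…,λₙ) ∈ (E')ⁿ` with `μ_{p,n}(λ) ≤ 1`. -/
theorem adjoint_tuples_eq_weak_summing_ball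
    [CompleteSpace E]
    {α : Type*} [MeasurableSpace α] (μ : Measure α)
    (p p' : ℝ≥0∞) [Fact (1 ≤ p)] [Fact (1 ≤ p')] (hp : p ≠ ∞)
    (hconj : 1 / p + 1 / p' = 1)
    (hdim : ∀ m : ℕ, ∃ X : Fin m → Set α, (∀ i, MeasurableSet (X i)) ∧
      Pairwise (Function.onFun Disjoint X) ∧ ∀ i, 0 < μ (X i) ∧ μ (X i) < ∞)
    (n : ℕ) :
    {lam : Fin n → StrongDual ℂ E | ∃ T : E →L[ℂ] Lp ℂ p μ, ‖T‖ ≤ 1 ∧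
        ∃ φ : Fin n → Lp ℂ p' μ, (∀ i, ‖φ i‖ ≤ 1) ∧
          (∀ i j, i ≠ j → (fun t => (φ i : α → ℂ) t * (φ j : α → ℂ) t) =ᵐ[μ] 0) ∧
          ∀ (i : Fin n) (x : E), lam i x = ∫ t, (T x : α → ℂ) t * (φ i : α → ℂ) t ∂μ}
      = {lam : Fin n → StrongDual ℂ E | muPN p.toReal lam ≤ 1} := by
  have hp0 : p ≠ 0 := fun h => by
    have h1 : (1 : ℝ≥0∞) ≤ p := Fact.out
    rw [h] at h1; exact absurd h1 (by simp)
  have hp'0 : p' ≠ 0 := fun h => by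
    have h1 : (1 : ℝ≥0∞) ≤ p' := Fact.out
    rw [h] at h1; exact absurd h1 (by simp)
  set q := p.toReal with hqdef
  have hq0 : 0 < q := ENNReal.toReal_pos hp0 hp
  ext lam
  simp only [Set.mem_setOf_eq]
  constructor
  · rintro ⟨T, hT, φ, hφn, hdisj, hlam⟩
    refine Real.sSup_le ?_ zero_le_one
    rintro r ⟨x, hx, rfl⟩
    suffices hs : ∑ i, ‖lam i x‖ ^ q ≤ 1 by
      have h0 : 0 ≤ ∑ i, ‖lam i x‖ ^ q :=
        Finset.sum_nonneg fun i _ => Real.rpow_nonneg (norm_nonneg _) _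
      calc (∑ i, ‖lam i x‖ ^ q) ^ (1/q) ≤ 1 ^ (1/q) :=
            Real.rpow_le_rpow h0 hs (by positivity)
        _ = 1 := Real.one_rpow _
    -- measurable representatives
    have hfm : AEStronglyMeasurable (⇑(T x)) μ := Lp.aestronglyMeasurable (T x)
    set f₀ : α → ℂ := hfm.mk _ with hf₀def
    have hf₀m : StronglyMeasurable f₀ := hfm.stronglyMeasurable_mk
    have hf₀ : ⇑(T x) =ᵐ[μ] f₀ := hfm.ae_eq_mk
    have hgm0 : ∀ i, AEStronglyMeasurable (⇑(φ i)) μ := fun i => Lp.aestronglyMeasurable (φ i)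
    set g : Fin n → α → ℂ := fun i => (hgm0 i).mk _ with hgdef
    have hgm : ∀ i, StronglyMeasurable (g i) := fun i => (hgm0 i).stronglyMeasurable_mk
    have hgae : ∀ i, ⇑(φ i) =ᵐ[μ] g i := fun i => (hgm0 i).ae_eq_mk
    set A : Fin n → Set α := fun i => g i ⁻¹' {0}ᶜ with hAdef
    have hA : ∀ i, MeasurableSet (A i) := fun i =>
      (hgm i).measurable (measurableSet_singleton (0 : ℂ)).compl
    -- eLpNorm of f is at most 1
    have hF : eLpNorm (⇑(T x)) p μ ≤ 1 := by
      have h1 : ‖T x‖ ≤ 1 := le_trans (T.le_opNorm x)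
        (by nlinarith [norm_nonneg x, norm_nonneg T, T.opNorm_nonneg])
      rw [Lp.norm_def] at h1
      have := ENNReal.ofReal_le_ofReal h1
      rwa [ENNReal.ofReal_toReal (Lp.eLpNorm_ne_top (T x)), ENNReal.ofReal_one] at this
    -- eLpNorm of each φ i is at most 1
    have hφE : ∀ i, eLpNorm (g i) p' μ ≤ 1 := by
      intro i
      rw [← eLpNorm_congr_ae (hgae i)]
      have h1 := hφn i
      rw [Lp.norm_def] at h1
      have := ENNReal.ofReal_le_ofReal h1
      rwa [ENNReal.ofReal_toReal (Lp.eLpNorm_ne_top (φ i)), ENNReal.ofReal_one] at this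
    -- key Hölder estimate
    have key : ∀ i, (‖lam i x‖₊ : ℝ≥0∞) ≤ eLpNorm ((A i).indicator f₀) p μ := by
      intro i
      calc (‖lam i x‖₊ : ℝ≥0∞) = ‖∫ t, (T x : α → ℂ) t * (φ i : α → ℂ) t ∂μ‖₊ := by
            rw [hlam i x]
        _ ≤ ∫⁻ t, ‖(T x : α → ℂ) t * (φ i : α → ℂ) t‖₊ ∂μ :=
            enorm_integral_le_lintegral_enorm _
        _ = ∫⁻ t, ‖(A i).indicator f₀ t * g i t‖₊ ∂μ := by
            apply lintegral_congr_ae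
            filter_upwards [hf₀, hgae i] with t h1 h2
            rw [h1, h2]
            congr 2
            by_cases ht : g i t = 0
            · simp [ht]
            · rw [Set.indicator_of_mem (by exact ht : t ∈ A i)]
        _ = eLpNorm (fun t => (A i).indicator f₀ t * g i t) 1 μ := by
            rw [eLpNorm_one_eq_lintegral_enorm]
            rfl
        _ ≤ eLpNorm ((A i).indicator f₀) p μ * eLpNorm (g i) p' μ := by
            have : ENNReal.HolderTriple p p' 1 := ⟨by simpa [one_div] using hconj⟩
            have h := eLpNorm_le_eLpNorm_mul_eLpNorm'_of_norm (μ := μ) (p := p) (q := p') (r := 1)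
              (hf₀m.indicator (hA i)).aestronglyMeasurable (hgm i).aestronglyMeasurable
              (fun a b => a * b) 1 (Filter.Eventually.of_forall fun t => by simp [norm_mul])
            simpa using h
        _ ≤ eLpNorm ((A i).indicator f₀) p μ * 1 := by
            gcongr; exact hφE i
        _ = eLpNorm ((A i).indicator f₀) p μ := mul_one _
    -- sum of p-th powers of truncated norms is at most 1
    have hae : ∀ᵐ t ∂μ, ∀ i j, i ≠ j → g i t * g j t = 0 := by
      rw [ae_all_iff]; intro i
      rw [ae_all_iff]; intro j
      by_cases hij : i = j
      · exact Filter.Eventually.of_forall fun t h => absurd hij h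
      · filter_upwards [hdisj i j hij, hgae i, hgae j] with t h1 h2 h3 _
        rw [← h2, ← h3]; exact h1
    have hsum : ∑ i, eLpNorm ((A i).indicator f₀) p μ ^ q ≤ 1 := by
      have hpow : ∀ (h : α → ℂ), eLpNorm h p μ ^ q
          = ∫⁻ t, (‖h t‖₊ : ℝ≥0∞) ^ q ∂μ := by
        intro h
        rw [eLpNorm_eq_lintegral_rpow_enorm_toReal hp0 hp, ← ENNReal.rpow_mul,
          one_div_mul_cancel hq0.ne', ENNReal.rpow_one]
        rfl
      have heq : ∀ i, eLpNorm ((A i).indicator f₀) p μ ^ q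
          = ∫⁻ t, (A i).indicator (fun s => (‖f₀ s‖₊ : ℝ≥0∞) ^ q) t ∂μ := by
        intro i
        rw [hpow]
        apply lintegral_congr
        intro t
        by_cases ht : t ∈ A i
        · simp [Set.indicator_of_mem ht]
        · simp [Set.indicator_of_notMem ht, ENNReal.zero_rpow_of_pos hq0]
      have hmeas : Measurable fun t => (‖f₀ t‖₊ : ℝ≥0∞) ^ q :=
        ENNReal.continuous_rpow_const.measurable.comp hf₀m.measurable.enorm
      calc ∑ i, eLpNorm ((A i).indicator f₀) p μ ^ q
          = ∑ i, ∫⁻ t, (A i).indicator (fun s => (‖f₀ s‖₊ : ℝ≥0∞) ^ q) t ∂μ :=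
            Finset.sum_congr rfl fun i _ => heq i
        _ = ∫⁻ t, ∑ i, (A i).indicator (fun s => (‖f₀ s‖₊ : ℝ≥0∞) ^ q) t ∂μ :=
            (lintegral_finset_sum _ fun i _ => hmeas.indicator (hA i)).symm
        _ ≤ ∫⁻ t, (‖f₀ t‖₊ : ℝ≥0∞) ^ q ∂μ := by
            refine lintegral_mono_ae ?_
            filter_upwards [hae] with t ht
            by_cases hex : ∃ j, t ∈ A j
            · obtain ⟨j, hj⟩ := hex
              rw [Finset.sum_eq_single j (fun i _ hij => Set.indicator_of_notMem (fun hti => by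
                  have h0 := ht i j hij
                  rcases mul_eq_zero.mp h0 with h | h
                  exacts [hti h, hj h]) _)
                (fun h => absurd (Finset.mem_univ j) h), Set.indicator_of_mem hj]
            · push_neg at hex
              simp [Set.indicator_of_notMem (hex _)]
        _ = eLpNorm f₀ p μ ^ q := (hpow f₀).symm
        _ = eLpNorm (⇑(T x)) p μ ^ q := by rw [eLpNorm_congr_ae hf₀]
        _ ≤ 1 ^ q := ENNReal.rpow_le_rpow hF hq0.le
        _ = 1 := ENNReal.one_rpow _
    -- conclude
    have hofReal : ENNReal.ofReal (∑ i, ‖lam i x‖ ^ q) ≤ 1 := by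
      rw [ENNReal.ofReal_sum_of_nonneg (fun i _ => by positivity)]
      refine le_trans (Finset.sum_le_sum fun i _ => ?_) hsum
      rw [← ENNReal.ofReal_rpow_of_nonneg (norm_nonneg _) hq0.le,
        ofReal_norm]
      exact ENNReal.rpow_le_rpow (key i) hq0.le
    exact ENNReal.ofReal_le_one.mp hofReal
  · intro hmu
    -- real conjugate exponents
    have hconjR : 1 / q + 1 / p'.toReal = 1 := by
      by_cases hp' : p' = ∞
      · have h1 : 1 / p = 1 := by simpa [hp'] using hconj
        have hp1 : p = 1 := by
          rw [one_div] at h1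
          rw [← inv_inv p, h1, inv_one]
        rw [hqdef, hp1, hp']
        simp
      · have hfin1 : 1 / p ≠ ∞ := by simp [one_div, hp0]
        have hfin2 : 1 / p' ≠ ∞ := by simp [one_div, hp'0]
        have h2 := congrArg ENNReal.toReal hconj
        rw [ENNReal.toReal_add hfin1 hfin2, ENNReal.toReal_one] at h2
        rw [one_div, one_div, ENNReal.toReal_inv, ENNReal.toReal_inv] at h2
        simpa [one_div] using h2
    -- bound from muPN
    have hbddA : BddAbove {r : ℝ | ∃ x : E, ‖x‖ ≤ 1 ∧ r = (∑ i, ‖lam i x‖ ^ q) ^ (1/q)} := by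
      refine ⟨(∑ i, ‖lam i‖ ^ q) ^ (1/q), ?_⟩
      rintro r ⟨x, hx, rfl⟩
      exact Real.rpow_le_rpow
        (Finset.sum_nonneg fun i _ => Real.rpow_nonneg (norm_nonneg _) _)
        (Finset.sum_le_sum fun i _ =>
          Real.rpow_le_rpow (norm_nonneg _) ((lam i).unit_le_opNorm x hx) hq0.le)
        (by positivity)
    have hunit : ∀ x : E, ‖x‖ ≤ 1 → (∑ i, ‖lam i x‖ ^ q) ^ (1/q) ≤ 1 := fun x hx =>
      le_trans (le_csSup hbddA ⟨x, hx, rfl⟩) hmu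
    have key2 : ∀ x : E, ∑ i, ‖lam i x‖ ^ q ≤ ‖x‖ ^ q := by
      intro x
      rcases eq_or_ne x 0 with rfl | hx0
      · simp [Real.zero_rpow hq0.ne']
      · have hn : (0:ℝ) < ‖x‖ := norm_pos_iff.mpr hx0
        have hxx : ‖((‖x‖⁻¹ : ℝ) : ℂ) • x‖ ≤ 1 := by
          rw [norm_smul, Complex.norm_real, Real.norm_eq_abs, abs_of_pos (inv_pos.mpr hn),
            inv_mul_cancel₀ hn.ne']
        have h1 := hunit _ hxx
        have hterm : ∀ i : Fin n, ‖lam i (((‖x‖⁻¹ : ℝ) : ℂ) • x)‖ ^ q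
            = ‖x‖⁻¹ ^ q * ‖lam i x‖ ^ q := by
          intro i
          rw [_root_.map_smul, smul_eq_mul, norm_mul, Complex.norm_real, Real.norm_eq_abs,
            abs_of_pos (inv_pos.mpr hn), Real.mul_rpow (inv_nonneg.mpr hn.le) (norm_nonneg _)]
        simp only [hterm] at h1
        have hsnn : 0 ≤ ∑ i, ‖lam i x‖ ^ q :=
          Finset.sum_nonneg fun i _ => Real.rpow_nonneg (norm_nonneg _) _
        rw [← Finset.mul_sum,
          Real.mul_rpow (Real.rpow_nonneg (inv_nonneg.mpr hn.le) _) hsnn,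
          ← Real.rpow_mul (inv_nonneg.mpr hn.le), mul_one_div_cancel hq0.ne',
          Real.rpow_one] at h1
        have h3 : (∑ i, ‖lam i x‖ ^ q) ^ (1/q) ≤ ‖x‖ := by
          calc (∑ i, ‖lam i x‖ ^ q) ^ (1/q)
              = ‖x‖ * (‖x‖⁻¹ * (∑ i, ‖lam i x‖ ^ q) ^ (1/q)) := by
                field_simp
            _ ≤ ‖x‖ * 1 := mul_le_mul_of_nonneg_left h1 hn.le
            _ = ‖x‖ := mul_one _
        calc ∑ i, ‖lam i x‖ ^ q = ((∑ i, ‖lam i x‖ ^ q) ^ (1/q)) ^ q := by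
              rw [← Real.rpow_mul hsnn, one_div_mul_cancel hq0.ne', Real.rpow_one]
          _ ≤ ‖x‖ ^ q := Real.rpow_le_rpow (Real.rpow_nonneg hsnn _) h3 hq0.le
    -- construction
    obtain ⟨X, hXm, hXd, hXf⟩ := hdim n
    have hfin : ∀ i, μ (X i) ≠ ∞ := fun i => (hXf i).2.ne
    have hzero : ∀ i, μ (X i) ≠ 0 := fun i => (hXf i).1.ne'
    set m : Fin n → ℝ := fun i => (μ (X i)).toReal with hmdef
    have hmpos : ∀ i, 0 < m i := fun i => ENNReal.toReal_pos (hzero i) (hfin i)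
    set c : Fin n → ℝ := fun i => m i ^ (-(1/q)) with hcdef
    set d : Fin n → ℝ := fun i => m i ^ (-(1/p'.toReal)) with hddef
    set T : E →L[ℂ] Lp ℂ p μ :=
      ∑ i, (lam i).smulRight (indicatorConstLp p (hXm i) (hfin i) ((c i : ℂ))) with hTdef
    have hTcoe : ∀ x : E, ⇑(T x)
        =ᵐ[μ] fun t => ∑ i, (X i).indicator (fun _ => (lam i x : ℂ) * (c i : ℂ)) t := by
      intro x
      have h1 : T x = ∑ i, lam i x • indicatorConstLp p (hXm i) (hfin i) ((c i : ℂ)) := by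
        rw [hTdef]
        simp [ContinuousLinearMap.sum_apply, ContinuousLinearMap.smulRight_apply]
      rw [h1]
      refine (lpCoeFnSum _ Finset.univ).trans ?_
      have h2 : ∀ i : Fin n,
          ⇑(lam i x • indicatorConstLp p (hXm i) (hfin i) ((c i : ℂ)))
            =ᵐ[μ] (X i).indicator (fun _ => (lam i x : ℂ) * (c i : ℂ)) := by
        intro i
        filter_upwards [Lp.coeFn_smul (lam i x)
          (indicatorConstLp p (hXm i) (hfin i) ((c i : ℂ))),
          indicatorConstLp_coeFn (p := p) (hs := hXm i) (hμs := hfin i)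
            (c := ((c i : ℂ)))] with t ha hb
        rw [ha, Pi.smul_apply, hb]
        by_cases ht : t ∈ X i
        · simp [Set.indicator_of_mem ht, smul_eq_mul]
        · simp [Set.indicator_of_notMem ht]
      filter_upwards [ae_all_iff.mpr h2] with t ht
      exact Finset.sum_congr rfl fun i _ => ht i
    have hTnorm : ∀ x : E, ‖T x‖ ≤ ‖x‖ := by
      intro x
      rw [Lp.norm_def, eLpNorm_congr_ae (hTcoe x), eLpNormSumInd hp0 hp hXm hXd]
      have hsnn : 0 ≤ ∑ i, ‖lam i x‖ ^ q :=
        Finset.sum_nonneg fun i _ => Real.rpow_nonneg (norm_nonneg _) _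
      have hterm : ∀ i : Fin n,
          (‖(lam i x : ℂ) * (c i : ℂ)‖₊ : ℝ≥0∞) ^ p.toReal * μ (X i)
            = ENNReal.ofReal (‖lam i x‖ ^ q) := by
        intro i
        have hci : (0:ℝ) < c i := Real.rpow_pos_of_pos (hmpos i) _
        have hmi : μ (X i) = ENNReal.ofReal (m i) := by
          rw [hmdef]; exact (ENNReal.ofReal_toReal (hfin i)).symm
        rw [← enorm_eq_nnnorm, ← ofReal_norm,
          ENNReal.ofReal_rpow_of_nonneg (norm_nonneg _) hq0.le, hmi,
          ← ENNReal.ofReal_mul (by positivity)]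
        congr 1
        rw [norm_mul, Complex.norm_real, Real.norm_eq_abs, abs_of_pos hci,
          Real.mul_rpow (norm_nonneg _) hci.le]
        have hcq : c i ^ q * m i = 1 := by
          show (m i ^ (-(1/q))) ^ q * m i = 1
          rw [← Real.rpow_mul (hmpos i).le]
          have he : (-(1/q)) * q = -1 := by field_simp
          rw [he, Real.rpow_neg_one, inv_mul_cancel₀ (hmpos i).ne']
        rw [mul_assoc, hcq, mul_one]
      rw [Finset.sum_congr rfl fun i _ => hterm i,
        ← ENNReal.ofReal_sum_of_nonneg (fun i _ => by positivity),
        ← ENNReal.toReal_rpow, ENNReal.toReal_ofReal hsnn]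
      calc (∑ i, ‖lam i x‖ ^ q) ^ (1/q) ≤ (‖x‖ ^ q) ^ (1/q) :=
            Real.rpow_le_rpow hsnn (key2 x) (by positivity)
        _ = ‖x‖ := by
            rw [← Real.rpow_mul (norm_nonneg x), mul_one_div_cancel hq0.ne', Real.rpow_one]
    refine ⟨T, T.opNorm_le_bound zero_le_one fun x => by rw [one_mul]; exact hTnorm x,
      fun i => indicatorConstLp p' (hXm i) (hfin i) ((d i : ℂ)), ?_, ?_, ?_⟩
    · intro i
      rw [norm_indicatorConstLp' hp'0 (hzero i)]
      have hdi : (0:ℝ) < d i := Real.rpow_pos_of_pos (hmpos i) _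
      rw [Complex.norm_real, Real.norm_eq_abs, abs_of_pos hdi,
        show μ.real (X i) = m i from rfl, hddef]
      rw [← Real.rpow_add (hmpos i), neg_add_cancel, Real.rpow_zero]
    · intro i j hij
      filter_upwards [indicatorConstLp_coeFn (p := p') (hs := hXm i) (hμs := hfin i)
          (c := ((d i : ℂ))),
        indicatorConstLp_coeFn (p := p') (hs := hXm j) (hμs := hfin j)
          (c := ((d j : ℂ)))] with t h1 h2
      show _ * _ = (0 : α → ℂ) t
      rw [h1, h2, Pi.zero_apply]
      by_cases ht : t ∈ X i
      · have htj : t ∉ X j := Set.disjoint_left.mp (hXd hij) ht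
        simp [Set.indicator_of_notMem htj]
      · simp [Set.indicator_of_notMem ht]
    · intro i x
      have hint : (fun t => (T x : α → ℂ) t *
            (indicatorConstLp p' (hXm i) (hfin i) ((d i : ℂ)) : α → ℂ) t)
          =ᵐ[μ] (X i).indicator (fun _ => (lam i x : ℂ) * (c i : ℂ) * (d i : ℂ)) := by
        filter_upwards [hTcoe x,
          indicatorConstLp_coeFn (p := p') (hs := hXm i) (hμs := hfin i)
            (c := ((d i : ℂ)))] with t h1 h2
        rw [h1, h2]
        by_cases ht : t ∈ X i
        · rw [Set.indicator_of_mem ht, Set.indicator_of_mem ht,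
            Finset.sum_eq_single i (fun j _ hji => Set.indicator_of_notMem
              (fun htj => Set.disjoint_left.mp (hXd hji) htj ht) _)
              (fun h => absurd (Finset.mem_univ i) h),
            Set.indicator_of_mem ht]
        · rw [Set.indicator_of_notMem ht, Set.indicator_of_notMem ht, mul_zero]
      rw [integral_congr_ae hint, integral_indicator_const _ (hXm i)]
      have hcd : m i * (c i * d i) = 1 := by
        have hcd' : c i * d i = m i ^ (-(1/q) + -(1/p'.toReal)) := by
          rw [hcdef, hddef]
          exact (Real.rpow_add (hmpos i) _ _).symm
        have h2 : (1:ℝ) + (-(1/q) + -(1/p'.toReal)) = 0 := by linarith [hconjR]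
        calc m i * (c i * d i) = m i * m i ^ (-(1/q) + -(1/p'.toReal)) := by rw [hcd']
          _ = m i ^ ((1:ℝ) + (-(1/q) + -(1/p'.toReal))) := by
              rw [Real.rpow_add (hmpos i) 1, Real.rpow_one]
          _ = m i ^ (0:ℝ) := by rw [h2]
          _ = 1 := Real.rpow_zero _
      have hfinal : ((μ (X i)).toReal : ℝ) • ((lam i x : ℂ) * (c i : ℂ) * (d i : ℂ))
          = lam i x := by
        rw [show ((μ (X i)).toReal : ℝ) = m i from rfl, Complex.real_smul]
        have hone : ((m i * (c i * d i) : ℝ) : ℂ) = 1 := by rw [hcd]; norm_num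
        calc ((m i : ℝ) : ℂ) * ((lam i x : ℂ) * (c i : ℂ) * (d i : ℂ))
            = lam i x * ((m i * (c i * d i) : ℝ) : ℂ) := by push_cast; ring
          _ = lam i x := by rw [hone, mul_one]
      exact hfinal.symm
end
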